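/- Let m < M be real numbers, let J be an interval containing [m, M], and let f : J → ℝ be a continuous concave function. Let A, B, C, D ∈ σ(J) satisfy A ≤ m·I, m·I ≤ B ≤ M·I, m·I ≤ C ≤ M·I and M·I ≤ D. If either (iii) B + C ≤ A + D and f(M) ≤ f(m), or (iv) A + D ≤ B + C and f(m) ≤ f(M), then f(A) + f(D) ≤ f(A) + f(D) − δ_f · X̃ ≤ f(B) + f(C), where X̃ = I − (1/(M−m))·( |B − ((M+m)/2)·I| + |C − ((M+m)/2)·I| ); that is, f(A) + f(D) − δ_f · X̃ ≤ f(B) + f(C) and f(A) + f(D) ≤ f(A) + f(D) − δ_f · X̃ (since δ_f ≤ 0 for concave f). -/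

import Mathlib

set_option maxHeartbeats 1000000
set_option synthInstance.maxHeartbeats 400000

/-- The absolute value of a (self-adjoint) bounded operator, via the
continuous functional calculus. -/
noncomputable def opAbs {H : Type*} [NormedAddCommGroup H] [InnerProductSpace ℂ H]
    [CompleteSpace H] (A : H →L[ℂ] H) : H →L[ℂ] H :=
  cfc (fun t : ℝ => |t|) A

section Aux

/-- Scalar chord bound: a concave function lies below its chord outside `(m, M)`. -/
private lemma scalar_chord {J : Set ℝ} {f : ℝ → ℝ} {m M : ℝ} (hmM : m < M)
    (hJmM : Set.Icc m M ⊆ J) (hconc : ConcaveOn ℝ J f) {x : ℝ} (hx : x ∈ J)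
    (hside : x ≤ m ∨ M ≤ x) :
    f x ≤ (M * f m - m * f M) / (M - m) + (f M - f m) / (M - m) * x := by
  have hm : m ∈ J := hJmM ⟨le_refl m, hmM.le⟩
  have hM : M ∈ J := hJmM ⟨hmM.le, le_refl M⟩
  have hMm : (0:ℝ) < M - m := by linarith
  have h2 : (M - m) * f x ≤ (M - x) * f m + (x - m) * f M := by
    rcases hside with hxm | hxM
    · rcases eq_or_lt_of_le hxm with rfl | hlt
      · simp
      · have hMx : (0:ℝ) < M - x := by linarith
        have ha : (0:ℝ) ≤ (M - m) / (M - x) := by positivity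
        have hb : (0:ℝ) ≤ (m - x) / (M - x) := by
          apply div_nonneg <;> linarith
        have hab : (M - m) / (M - x) + (m - x) / (M - x) = 1 := by
          field_simp; ring
        have hcomb : ((M - m) / (M - x)) • x + ((m - x) / (M - x)) • M = m := by
          simp only [smul_eq_mul]; field_simp; ring
        have hcc := hconc.2 hx hM ha hb hab
        rw [hcomb] at hcc
        simp only [smul_eq_mul] at hcc
        have h3 := mul_le_mul_of_nonneg_left hcc hMx.le
        have h4 : (M - x) * ((M - m) / (M - x) * f x + (m - x) / (M - x) * f M)
            = (M - m) * f x + (m - x) * f M := by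
          field_simp
        rw [h4] at h3
        linarith
    · rcases eq_or_lt_of_le hxM with rfl | hlt
      · simp
      · have hxm' : (0:ℝ) < x - m := by linarith
        have ha : (0:ℝ) ≤ (M - m) / (x - m) := by positivity
        have hb : (0:ℝ) ≤ (x - M) / (x - m) := by
          apply div_nonneg <;> linarith
        have hab : (M - m) / (x - m) + (x - M) / (x - m) = 1 := by
          field_simp; ring
        have hcomb : ((M - m) / (x - m)) • x + ((x - M) / (x - m)) • m = M := by
          simp only [smul_eq_mul]; field_simp; ring
        have hcc := hconc.2 hx hm ha hb hab
        rw [hcomb] at hcc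
        simp only [smul_eq_mul] at hcc
        have h3 := mul_le_mul_of_nonneg_left hcc hxm'.le
        have h4 : (x - m) * ((M - m) / (x - m) * f x + (x - M) / (x - m) * f m)
            = (M - m) * f x + (x - M) * f m := by
          field_simp
        rw [h4] at h3
        linarith
  rw [← sub_nonneg]
  have key : (M * f m - m * f M) / (M - m) + (f M - f m) / (M - m) * x - f x
      = ((M - x) * f m + (x - m) * f M - (M - m) * f x) / (M - m) := by
    field_simp; ring
  rw [key]
  exact div_nonneg (by linarith) hMm.le

/-- Scalar refined Jensen bound on `[m, M]` for a concave function. -/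
private lemma scalar_mid {J : Set ℝ} {f : ℝ → ℝ} {m M : ℝ} (hmM : m < M)
    (hJmM : Set.Icc m M ⊆ J) (hconc : ConcaveOn ℝ J f) {x : ℝ} (hx : x ∈ Set.Icc m M) :
    (M * f m - m * f M) / (M - m) - (f m + f M - 2 * f ((M + m) / 2)) / 2
      + (f M - f m) / (M - m) * x
      + (f m + f M - 2 * f ((M + m) / 2)) / (M - m) * |x - (M + m) / 2| ≤ f x := by
  have hm : m ∈ J := hJmM ⟨le_refl m, hmM.le⟩
  have hM : M ∈ J := hJmM ⟨hmM.le, le_refl M⟩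
  have hc : (M + m) / 2 ∈ J := hJmM ⟨by linarith, by linarith⟩
  have hMm : (0:ℝ) < M - m := by linarith
  obtain ⟨hxm, hxM⟩ := hx
  rw [← sub_nonneg]
  rcases le_total x ((M + m) / 2) with hxc | hcx
  · have habs : |x - (M + m) / 2| = (M + m) / 2 - x := by
      rw [abs_of_nonpos (by linarith)]; ring
    have ha : (0:ℝ) ≤ (M + m - 2 * x) / (M - m) := by
      apply div_nonneg <;> linarith
    have hb : (0:ℝ) ≤ (2 * x - 2 * m) / (M - m) := by
      apply div_nonneg <;> linarith
    have hab : (M + m - 2 * x) / (M - m) + (2 * x - 2 * m) / (M - m) = 1 := by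
      rw [← add_div, div_eq_one_iff_eq hMm.ne']; ring
    have hcomb : ((M + m - 2 * x) / (M - m)) • m
        + ((2 * x - 2 * m) / (M - m)) • ((M + m) / 2) = x := by
      simp only [smul_eq_mul]; field_simp; ring
    have hcc := hconc.2 hm hc ha hb hab
    rw [hcomb] at hcc
    simp only [smul_eq_mul] at hcc
    have h3 := mul_le_mul_of_nonneg_left hcc hMm.le
    have h4 : (M - m) * ((M + m - 2 * x) / (M - m) * f m
          + (2 * x - 2 * m) / (M - m) * f ((M + m) / 2))
        = (M + m - 2 * x) * f m + (2 * x - 2 * m) * f ((M + m) / 2) := by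
      field_simp
    rw [h4] at h3
    have key : f x - ((M * f m - m * f M) / (M - m)
          - (f m + f M - 2 * f ((M + m) / 2)) / 2 + (f M - f m) / (M - m) * x
          + (f m + f M - 2 * f ((M + m) / 2)) / (M - m) * |x - (M + m) / 2|)
        = ((M - m) * f x
            - ((M + m - 2 * x) * f m + (2 * x - 2 * m) * f ((M + m) / 2))) / (M - m) := by
      rw [habs]
      field_simp
      ring
    rw [key]
    apply div_nonneg _ hMm.le
    linarith
  · have habs : |x - (M + m) / 2| = x - (M + m) / 2 := by
      rw [abs_of_nonneg (by linarith)]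
    have ha : (0:ℝ) ≤ (2 * x - (M + m)) / (M - m) := by
      apply div_nonneg <;> linarith
    have hb : (0:ℝ) ≤ (2 * M - 2 * x) / (M - m) := by
      apply div_nonneg <;> linarith
    have hab : (2 * x - (M + m)) / (M - m) + (2 * M - 2 * x) / (M - m) = 1 := by
      rw [← add_div, div_eq_one_iff_eq hMm.ne']; ring
    have hcomb : ((2 * x - (M + m)) / (M - m)) • M
        + ((2 * M - 2 * x) / (M - m)) • ((M + m) / 2) = x := by
      simp only [smul_eq_mul]; field_simp; ring
    have hcc := hconc.2 hM hc ha hb hab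
    rw [hcomb] at hcc
    simp only [smul_eq_mul] at hcc
    have h3 := mul_le_mul_of_nonneg_left hcc hMm.le
    have h4 : (M - m) * ((2 * x - (M + m)) / (M - m) * f M
          + (2 * M - 2 * x) / (M - m) * f ((M + m) / 2))
        = (2 * x - (M + m)) * f M + (2 * M - 2 * x) * f ((M + m) / 2) := by
      field_simp
    rw [h4] at h3
    have key : f x - ((M * f m - m * f M) / (M - m)
          - (f m + f M - 2 * f ((M + m) / 2)) / 2 + (f M - f m) / (M - m) * x
          + (f m + f M - 2 * f ((M + m) / 2)) / (M - m) * |x - (M + m) / 2|)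
        = ((M - m) * f x
            - ((2 * x - (M + m)) * f M + (2 * M - 2 * x) * f ((M + m) / 2))) / (M - m) := by
      rw [habs]
      field_simp
      ring
    rw [key]
    apply div_nonneg _ hMm.le
    linarith

variable {H : Type*} [NormedAddCommGroup H] [InnerProductSpace ℂ H] [CompleteSpace H]

private lemma opSmul_nonneg (r : ℝ) (hr : 0 ≤ r) (a : H →L[ℂ] H) (ha : 0 ≤ a) :
    0 ≤ r • a := by
  have hsa : IsSelfAdjoint a := .of_nonneg ha
  rw [← cfc_smul_id (R := ℝ) r a hsa]
  exact cfc_nonneg fun x hx => smul_nonneg hr (spectrum_nonneg_of_nonneg ha hx)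

private lemma spectrum_le_of_le {a : H →L[ℂ] H} (ha : IsSelfAdjoint a) {r : ℝ}
    (h : a ≤ r • 1) : ∀ x ∈ spectrum ℝ a, x ≤ r := by
  rw [← Algebra.algebraMap_eq_smul_one (A := H →L[ℂ] H) r] at h
  exact (le_algebraMap_iff_spectrum_le ha).mp h

private lemma le_spectrum_of_le {a : H →L[ℂ] H} (ha : IsSelfAdjoint a) {r : ℝ}
    (h : r • 1 ≤ a) : ∀ x ∈ spectrum ℝ a, r ≤ x := by
  rw [← Algebra.algebraMap_eq_smul_one (A := H →L[ℂ] H) r] at h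
  exact (algebraMap_le_iff_le_spectrum ha).mp h

private lemma cfc_sub_const (c : ℝ) (B : H →L[ℂ] H) (hB : IsSelfAdjoint B) :
    cfc (fun t : ℝ => t - c) B = B - c • 1 := by
  rw [cfc_sub (fun t : ℝ => t) (fun _ => c) B (by fun_prop) (by fun_prop), cfc_id' ℝ B hB,
    cfc_const c B hB, Algebra.algebraMap_eq_smul_one]

private lemma cfc_abs_sub_const (c : ℝ) (B : H →L[ℂ] H) (hB : IsSelfAdjoint B) :
    cfc (fun t : ℝ => |t - c|) B = opAbs (B - c • 1) := by
  calc cfc (fun t : ℝ => |t - c|) B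
      = cfc (fun s : ℝ => |s|) (cfc (fun t : ℝ => t - c) B) :=
        cfc_comp' (fun s : ℝ => |s|) (fun t : ℝ => t - c) B
          continuous_abs.continuousOn (by fun_prop) hB
    _ = opAbs (B - c • 1) := by rw [cfc_sub_const c B hB]; rfl

private lemma smul_one_isSelfAdjoint (r : ℝ) : IsSelfAdjoint (r • (1 : H →L[ℂ] H)) :=
  IsSelfAdjoint.smul (star_trivial r) (IsSelfAdjoint.one _)

/-- The chord above a concave function, at an operator whose spectrum lies outside `(m, M)`. -/
private lemma cfc_le_line {m M : ℝ} (hmM : m < M) {J : Set ℝ} (hJmM : Set.Icc m M ⊆ J)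
    {f : ℝ → ℝ} (hf : ContinuousOn f J) (hconc : ConcaveOn ℝ J f) (A : H →L[ℂ] H)
    (hAsa : IsSelfAdjoint A) (hAspec : spectrum ℝ A ⊆ J)
    (hside : ∀ x ∈ spectrum ℝ A, x ≤ m ∨ M ≤ x) :
    cfc f A ≤ ((M * f m - m * f M) / (M - m)) • 1 + ((f M - f m) / (M - m)) • A := by
  have h1 : cfc f A
      ≤ cfc (fun t : ℝ => (M * f m - m * f M) / (M - m) + (f M - f m) / (M - m) * t) A :=
    cfc_mono (fun x hx => scalar_chord hmM hJmM hconc (hAspec hx) (hside x hx))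
      (hf.mono hAspec) (by fun_prop)
  refine h1.trans (le_of_eq ?_)
  rw [cfc_const_add ((M * f m - m * f M) / (M - m)) (fun t : ℝ => (f M - f m) / (M - m) * t) A
      (by fun_prop) hAsa,
    cfc_const_mul_id ((f M - f m) / (M - m)) A hAsa, Algebra.algebraMap_eq_smul_one]

/-- The refined lower chord bound at an operator with spectrum in `[m, M]`. -/
private lemma line_le_cfc {m M : ℝ} (hmM : m < M) {J : Set ℝ} (hJmM : Set.Icc m M ⊆ J)
    {f : ℝ → ℝ} (hf : ContinuousOn f J) (hconc : ConcaveOn ℝ J f) (B : H →L[ℂ] H)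
    (hBsa : IsSelfAdjoint B) (hBspec : spectrum ℝ B ⊆ J)
    (hBl : m • 1 ≤ B) (hBu : B ≤ M • 1) :
    ((M * f m - m * f M) / (M - m) - (f m + f M - 2 * f ((M + m) / 2)) / 2) • 1
      + ((f M - f m) / (M - m)) • B
      + ((f m + f M - 2 * f ((M + m) / 2)) / (M - m)) • opAbs (B - ((M + m) / 2) • 1)
      ≤ cfc f B := by
  have hmem : ∀ x ∈ spectrum ℝ B, x ∈ Set.Icc m M := fun x hx =>
    ⟨le_spectrum_of_le hBsa hBl x hx, spectrum_le_of_le hBsa hBu x hx⟩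
  have h1 : cfc (fun t : ℝ => ((M * f m - m * f M) / (M - m)
        - (f m + f M - 2 * f ((M + m) / 2)) / 2 + (f M - f m) / (M - m) * t)
        + (f m + f M - 2 * f ((M + m) / 2)) / (M - m) * |t - (M + m) / 2|) B ≤ cfc f B := by
    refine cfc_mono (fun x hx => ?_) (by fun_prop) (hf.mono hBspec)
    have := scalar_mid hmM hJmM hconc (hmem x hx)
    linarith
  refine le_trans (le_of_eq ?_) h1
  rw [cfc_add (a := B)
      (fun t : ℝ => (M * f m - m * f M) / (M - m)
        - (f m + f M - 2 * f ((M + m) / 2)) / 2 + (f M - f m) / (M - m) * t)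
      (fun t : ℝ => (f m + f M - 2 * f ((M + m) / 2)) / (M - m) * |t - (M + m) / 2|)
      (by fun_prop) (by fun_prop),
    cfc_const_add ((M * f m - m * f M) / (M - m) - (f m + f M - 2 * f ((M + m) / 2)) / 2)
      (fun t : ℝ => (f M - f m) / (M - m) * t) B (by fun_prop) hBsa,
    cfc_const_mul_id ((f M - f m) / (M - m)) B hBsa,
    cfc_const_mul ((f m + f M - 2 * f ((M + m) / 2)) / (M - m))
      (fun t : ℝ => |t - (M + m) / 2|) B (by fun_prop),
    cfc_abs_sub_const ((M + m) / 2) B hBsa, Algebra.algebraMap_eq_smul_one, add_assoc]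

private lemma opAbs_le {m M : ℝ} (hmM : m < M) (B : H →L[ℂ] H) (hBsa : IsSelfAdjoint B)
    (hBl : m • 1 ≤ B) (hBu : B ≤ M • 1) :
    opAbs (B - ((M + m) / 2) • 1) ≤ ((M - m) / 2) • 1 := by
  have hBc : IsSelfAdjoint (B - ((M + m) / 2) • 1) := hBsa.sub (smul_one_isSelfAdjoint _)
  have hup : B - ((M + m) / 2) • 1 ≤ (M - (M + m) / 2) • 1 := by
    calc B - ((M + m) / 2) • 1 ≤ M • 1 - ((M + m) / 2) • 1 := sub_le_sub_right hBu _
      _ = (M - (M + m) / 2) • 1 := (sub_smul M ((M + m) / 2) 1).symm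
  have hlo : (m - (M + m) / 2) • 1 ≤ B - ((M + m) / 2) • 1 := by
    calc (m - (M + m) / 2) • (1 : H →L[ℂ] H) = m • 1 - ((M + m) / 2) • 1 :=
        sub_smul m ((M + m) / 2) 1
      _ ≤ B - ((M + m) / 2) • 1 := sub_le_sub_right hBl _
  have hspec : ∀ x ∈ spectrum ℝ (B - ((M + m) / 2) • 1), |x| ≤ (M - m) / 2 := by
    intro x hx
    have h1 := spectrum_le_of_le hBc hup x hx
    have h2 := le_spectrum_of_le hBc hlo x hx
    rw [abs_le]
    constructor <;> linarith
  have h := cfc_le_algebraMap (R := ℝ) (fun t : ℝ => |t|) ((M - m) / 2)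
    (B - ((M + m) / 2) • 1) hspec continuous_abs.continuousOn hBc
  rwa [Algebra.algebraMap_eq_smul_one] at h

end Aux

/-- Theorem 3.7, concave case: the inequality is reversed. -/
theorem jensen_type_without_sum_condition_concave {H : Type*} [NormedAddCommGroup H]
    [InnerProductSpace ℂ H] [CompleteSpace H] (m M : ℝ) (hmM : m < M) (J : Set ℝ)
    (hJ : J.OrdConnected) (hJmM : Set.Icc m M ⊆ J) (f : ℝ → ℝ)
    (hf : ContinuousOn f J) (hconc : ConcaveOn ℝ J f)
    (A B C D : H →L[ℂ] H)
    (hAsa : IsSelfAdjoint A) (hAspec : spectrum ℝ A ⊆ J)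
    (hBsa : IsSelfAdjoint B) (hBspec : spectrum ℝ B ⊆ J)
    (hCsa : IsSelfAdjoint C) (hCspec : spectrum ℝ C ⊆ J)
    (hDsa : IsSelfAdjoint D) (hDspec : spectrum ℝ D ⊆ J)
    (hA : A ≤ m • 1) (hBl : m • 1 ≤ B) (hBu : B ≤ M • 1)
    (hCl : m • 1 ≤ C) (hCu : C ≤ M • 1) (hD : M • 1 ≤ D)
    (hcond : (B + C ≤ A + D ∧ f M ≤ f m) ∨ (A + D ≤ B + C ∧ f m ≤ f M)) :
    cfc f A + cfc f D ≤
        cfc f A + cfc f D -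
          (f m + f M - 2 * f ((m + M) / 2)) •
            ((1 : H →L[ℂ] H) -
              (M - m)⁻¹ •
                (opAbs (B - ((M + m) / 2) • 1) + opAbs (C - ((M + m) / 2) • 1))) ∧
      cfc f A + cfc f D -
          (f m + f M - 2 * f ((m + M) / 2)) •
            ((1 : H →L[ℂ] H) -
              (M - m)⁻¹ •
                (opAbs (B - ((M + m) / 2) • 1) + opAbs (C - ((M + m) / 2) • 1))) ≤
        cfc f B + cfc f C := by
  rw [show (m + M) / 2 = (M + m) / 2 from by ring]
  have hMm : (0:ℝ) < M - m := by linarith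
  have hm : m ∈ J := hJmM ⟨le_refl m, hmM.le⟩
  have hM : M ∈ J := hJmM ⟨hmM.le, le_refl M⟩
  -- δ ≤ 0
  have hδ : f m + f M - 2 * f ((M + m) / 2) ≤ 0 := by
    have h := hconc.2 hm hM (by norm_num : (0:ℝ) ≤ 1/2) (by norm_num : (0:ℝ) ≤ 1/2)
      (by norm_num)
    simp only [smul_eq_mul] at h
    rw [show (1/2 : ℝ) * m + (1/2 : ℝ) * M = (M + m) / 2 from by ring] at h
    linarith
  -- X̃ ≥ 0
  have hPB := opAbs_le hmM B hBsa hBl hBu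
  have hPC := opAbs_le hmM C hCsa hCl hCu
  have hX : 0 ≤ (1 : H →L[ℂ] H) - (M - m)⁻¹ •
      (opAbs (B - ((M + m) / 2) • 1) + opAbs (C - ((M + m) / 2) • 1)) := by
    have hsum : opAbs (B - ((M + m) / 2) • 1) + opAbs (C - ((M + m) / 2) • 1)
        ≤ (M - m) • 1 := by
      calc opAbs (B - ((M + m) / 2) • 1) + opAbs (C - ((M + m) / 2) • 1)
          ≤ ((M - m) / 2) • 1 + ((M - m) / 2) • 1 := add_le_add hPB hPC
        _ = (M - m) • (1 : H →L[ℂ] H) := by rw [← add_smul]; norm_num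
    have h0 : 0 ≤ (M - m) • (1 : H →L[ℂ] H)
        - (opAbs (B - ((M + m) / 2) • 1) + opAbs (C - ((M + m) / 2) • 1)) :=
      sub_nonneg.mpr hsum
    have h1 := opSmul_nonneg (M - m)⁻¹ (by positivity) _ h0
    have h2 : (M - m)⁻¹ • ((M - m) • (1 : H →L[ℂ] H)
          - (opAbs (B - ((M + m) / 2) • 1) + opAbs (C - ((M + m) / 2) • 1)))
        = 1 - (M - m)⁻¹ •
            (opAbs (B - ((M + m) / 2) • 1) + opAbs (C - ((M + m) / 2) • 1)) := by
      rw [smul_sub, smul_smul, inv_mul_cancel₀ hMm.ne', one_smul]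
    rwa [h2] at h1
  -- the four chord bounds
  have hA' := cfc_le_line hmM hJmM hf hconc A hAsa hAspec
    (fun x hx => Or.inl (spectrum_le_of_le hAsa hA x hx))
  have hD' := cfc_le_line hmM hJmM hf hconc D hDsa hDspec
    (fun x hx => Or.inr (le_spectrum_of_le hDsa hD x hx))
  have hB' := line_le_cfc hmM hJmM hf hconc B hBsa hBspec hBl hBu
  have hC' := line_le_cfc hmM hJmM hf hconc C hCsa hCspec hCl hCu
  -- β • (A + D) ≤ β • (B + C)
  have hβ : ((f M - f m) / (M - m)) • (A + D) ≤ ((f M - f m) / (M - m)) • (B + C) := by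
    rcases hcond with ⟨h1, h2⟩ | ⟨h1, h2⟩
    · have h3 : 0 ≤ (-((f M - f m) / (M - m))) • ((A + D) - (B + C)) := by
        refine opSmul_nonneg _ ?_ _ (sub_nonneg.mpr h1)
        rw [neg_nonneg]
        exact div_nonpos_iff.mpr (Or.inr ⟨by linarith, hMm.le⟩)
      rw [neg_smul, smul_sub, neg_sub] at h3
      exact sub_nonneg.mp h3
    · have h3 : 0 ≤ ((f M - f m) / (M - m)) • ((B + C) - (A + D)) :=
        opSmul_nonneg _ (div_nonneg (by linarith) hMm.le) _ (sub_nonneg.mpr h1)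
      rw [smul_sub] at h3
      exact sub_nonneg.mp h3
  constructor
  · rw [le_sub_self_iff]
    have h1 := opSmul_nonneg (-(f m + f M - 2 * f ((M + m) / 2))) (by linarith) _ hX
    rw [neg_smul] at h1
    exact neg_nonneg.mp h1
  · calc cfc f A + cfc f D -
          (f m + f M - 2 * f ((M + m) / 2)) •
            ((1 : H →L[ℂ] H) -
              (M - m)⁻¹ •
                (opAbs (B - ((M + m) / 2) • 1) + opAbs (C - ((M + m) / 2) • 1)))
        ≤ (((M * f m - m * f M) / (M - m)) • 1 + ((f M - f m) / (M - m)) • A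
            + (((M * f m - m * f M) / (M - m)) • 1 + ((f M - f m) / (M - m)) • D)) -
          (f m + f M - 2 * f ((M + m) / 2)) •
            ((1 : H →L[ℂ] H) -
              (M - m)⁻¹ •
                (opAbs (B - ((M + m) / 2) • 1) + opAbs (C - ((M + m) / 2) • 1))) :=
          sub_le_sub_right (add_le_add hA' hD') _
      _ = ((((M * f m - m * f M) / (M - m)
              - (f m + f M - 2 * f ((M + m) / 2)) / 2) • 1
            + ((f M - f m) / (M - m)) • B
            + ((f m + f M - 2 * f ((M + m) / 2)) / (M - m)) •
                opAbs (B - ((M + m) / 2) • 1))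
          + (((M * f m - m * f M) / (M - m)
              - (f m + f M - 2 * f ((M + m) / 2)) / 2) • 1
            + ((f M - f m) / (M - m)) • C
            + ((f m + f M - 2 * f ((M + m) / 2)) / (M - m)) •
                opAbs (C - ((M + m) / 2) • 1)))
          - (((f M - f m) / (M - m)) • (B + C) - ((f M - f m) / (M - m)) • (A + D)) := by
          match_scalars <;> field_simp <;> ring
      _ ≤ (((M * f m - m * f M) / (M - m)
              - (f m + f M - 2 * f ((M + m) / 2)) / 2) • 1
            + ((f M - f m) / (M - m)) • B
            + ((f m + f M - 2 * f ((M + m) / 2)) / (M - m)) •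
                opAbs (B - ((M + m) / 2) • 1))
          + (((M * f m - m * f M) / (M - m)
              - (f m + f M - 2 * f ((M + m) / 2)) / 2) • 1
            + ((f M - f m) / (M - m)) • C
            + ((f m + f M - 2 * f ((M + m) / 2)) / (M - m)) •
                opAbs (C - ((M + m) / 2) • 1)) := sub_le_self _ (sub_nonneg.mpr hβ)
      _ ≤ cfc f B + cfc f C := add_le_add hB' hC'
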